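/- For each index i: if α_i = 1 then deg D_{e_i} = ĝ_i, and if α_i ≥ 2 then deg D_{e_i} = 0. (This is the degree form of the identity Z^{(i)} = L_{e_i} for the exceptional part of the coordinate function x_i on the minimal good resolution.) -/

import Mathlib

/-- If `α i = 1` then `deg D_{e i} = ĝ i`, and if `α i ≥ 2` then `deg D_{e i} = 0`. -/
theorem brieskorn_degD_e
    (m : ℕ) (hm : 3 ≤ m) (a : Fin m → ℕ)
    (ha : ∀ i, 2 ≤ a i) (hmono : Monotone a)
    (ℓ : ℕ) (hℓ : ℓ = Finset.univ.lcm a)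
    (ℓi : Fin m → ℕ) (hℓi : ∀ i, ℓi i = (Finset.univ.erase i).lcm a)
    (α : Fin m → ℕ) (hα : ∀ i, α i = ℓ / ℓi i)
    (αp : ℕ) (hαp : αp = ∏ i, α i)
    (e : Fin m → ℕ) (he : ∀ i, e i = ℓ / a i)
    (g : ℕ) (hg : g = (∏ i, a i) / ℓ)
    (gi : Fin m → ℕ) (hgi : ∀ i, gi i = g * α i / a i)
    (β : Fin m → ℕ) (hβ : ∀ i, β i < α i) (hβ' : ∀ i, α i ∣ e i * β i + 1)
    (c₀ : ℤ) (hc₀pos : 0 < c₀)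
    (hc₀ : (c₀ : ℚ) = (∑ i, (gi i : ℚ) * (β i : ℚ) / (α i : ℚ))
        + (∏ i, (a i : ℚ)) / (ℓ : ℚ) ^ 2)
    (degD : ℕ → ℤ)
    (hdegD : ∀ n : ℕ, degD n
        = (n : ℤ) * c₀ - ∑ i, (gi i : ℤ) * ⌈((n : ℚ) * (β i : ℚ)) / (α i : ℚ)⌉)
    :
    ∀ i : Fin m,
      (α i = 1 → degD (e i) = (gi i : ℤ)) ∧
      (2 ≤ α i → degD (e i) = 0) := by
  -- basic positivity and divisibility facts
  have hapos : ∀ j, 0 < a j := fun j => lt_of_lt_of_le (by norm_num) (ha j)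
  have haℓ : ∀ j, a j ∣ ℓ := fun j => by
    rw [hℓ]; exact Finset.dvd_lcm (Finset.mem_univ j)
  have hℓiℓ : ∀ j, ℓi j ∣ ℓ := fun j => by
    rw [hℓi, hℓ]
    exact Finset.lcm_dvd fun b _ => Finset.dvd_lcm (Finset.mem_univ b)
  have haℓi : ∀ j k, j ≠ k → a j ∣ ℓi k := fun j k hjk => by
    rw [hℓi]
    exact Finset.dvd_lcm (Finset.mem_erase.mpr ⟨hjk, Finset.mem_univ j⟩)
  have hℓpos : 0 < ℓ := by
    rw [hℓ]
    rcases Nat.eq_zero_or_pos (Finset.univ.lcm a) with h | h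
    · exfalso
      rw [Finset.lcm_eq_zero_iff] at h
      obtain ⟨j, _, hj⟩ := h
      exact (hapos j).ne' hj
    · exact h
  have hℓipos : ∀ j, 0 < ℓi j := fun j => Nat.pos_of_dvd_of_pos (hℓiℓ j) hℓpos
  have hαpos : ∀ j, 0 < α j := fun j => by
    rw [hα]
    exact Nat.div_pos (Nat.le_of_dvd hℓpos (hℓiℓ j)) (hℓipos j)
  have hepos : ∀ j, 0 < e j := fun j => by
    rw [he]
    exact Nat.div_pos (Nat.le_of_dvd hℓpos (haℓ j)) (hapos j)
  have heai : ∀ j, e j * a j = ℓ := fun j => by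
    rw [he]; exact Nat.div_mul_cancel (haℓ j)
  have hαℓi : ∀ j, α j * ℓi j = ℓ := fun j => by
    rw [hα]; exact Nat.div_mul_cancel (hℓiℓ j)
  have hℓprod : ℓ ∣ ∏ j, a j := by
    rw [hℓ]
    exact Finset.lcm_dvd fun b _ => Finset.dvd_prod_of_mem a (Finset.mem_univ b)
  have hgℓ : g * ℓ = ∏ j, a j := by
    rw [hg]; exact Nat.div_mul_cancel hℓprod
  -- α j divides e i for j ≠ i
  have hαdvd : ∀ i j : Fin m, j ≠ i → α j ∣ e i := by
    intro i j hne
    obtain ⟨t, ht⟩ := haℓi i j (fun h => hne h.symm)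
    have haipos := hapos i
    have h1 : e i = t * (α j) := by
      have h2 : a i * (t * α j) = a i * e i := by
        have : a i * (t * α j) = α j * ℓi j := by rw [ht]; ring
        rw [this, hαℓi j, ← heai i]; ring
      have := Nat.eq_of_mul_eq_mul_left haipos h2
      omega
    exact ⟨t, by rw [h1]; ring⟩
  intro i
  -- key divisibility: gi i * a i = g * α i
  have hgia : gi i * a i = g * α i := by
    have hdvd : a i ∣ g * α i := by
      obtain ⟨u, hu⟩ : ℓi i ∣ ∏ j ∈ Finset.univ.erase i, a j := by
        rw [hℓi]
        exact Finset.lcm_dvd fun b hb => Finset.dvd_prod_of_mem a hb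
      refine ⟨u, ?_⟩
      have hkey : (g * α i) * ℓi i = (a i * u) * ℓi i := by
        calc (g * α i) * ℓi i = g * (α i * ℓi i) := by ring
          _ = g * ℓ := by rw [hαℓi]
          _ = ∏ j, a j := hgℓ
          _ = a i * ∏ j ∈ Finset.univ.erase i, a j :=
              (Finset.mul_prod_erase _ _ (Finset.mem_univ i)).symm
          _ = a i * (ℓi i * u) := by rw [hu]
          _ = (a i * u) * ℓi i := by ring
      exact Nat.eq_of_mul_eq_mul_right (hℓipos i) hkey
    rw [hgi]
    exact Nat.div_mul_cancel hdvd
  -- the master natural-number identity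
  have hkeyN : α i * (e i * ∏ j, a j) = gi i * ℓ ^ 2 := by
    calc α i * (e i * ∏ j, a j) = α i * (e i * (g * ℓ)) := by rw [hgℓ]
      _ = e i * (g * α i) * ℓ := by ring
      _ = e i * (gi i * a i) * ℓ := by rw [hgia]
      _ = gi i * ((e i * a i) * ℓ) := by ring
      _ = gi i * (ℓ * ℓ) := by rw [heai]
      _ = gi i * ℓ ^ 2 := by ring
  -- cast nonzero facts
  have hℓQ : (ℓ : ℚ) ≠ 0 := Nat.cast_ne_zero.mpr hℓpos.ne'
  have hαQ : ∀ j, (α j : ℚ) ≠ 0 := fun j => Nat.cast_ne_zero.mpr (hαpos j).ne'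
  have haQ : (a i : ℚ) ≠ 0 := Nat.cast_ne_zero.mpr (hapos i).ne'
  have heQ : (e i : ℚ) ≠ 0 := Nat.cast_ne_zero.mpr (hepos i).ne'
  -- the main rational expression for degD (e i)
  have hsum : (degD (e i) : ℚ)
      = (∑ j, (gi j : ℚ) * (((e i : ℚ) * (β j : ℚ) / (α j : ℚ))
          - ((⌈(e i : ℚ) * (β j : ℚ) / (α j : ℚ)⌉ : ℤ) : ℚ)))
        + (e i : ℚ) * (∏ j, (a j : ℚ)) / (ℓ : ℚ) ^ 2 := by
    have h1 : (degD (e i) : ℚ)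
        = (e i : ℚ) * (c₀ : ℚ)
          - ∑ j, (gi j : ℚ) * ((⌈(e i : ℚ) * (β j : ℚ) / (α j : ℚ)⌉ : ℤ) : ℚ) := by
      rw [hdegD (e i)]; push_cast; ring
    have h2 : ∑ j, (gi j : ℚ) * (((e i : ℚ) * (β j : ℚ) / (α j : ℚ))
            - ((⌈(e i : ℚ) * (β j : ℚ) / (α j : ℚ)⌉ : ℤ) : ℚ))
        = (∑ j, (gi j : ℚ) * ((e i : ℚ) * (β j : ℚ) / (α j : ℚ)))
          - ∑ j, (gi j : ℚ) * ((⌈(e i : ℚ) * (β j : ℚ) / (α j : ℚ)⌉ : ℤ) : ℚ) := by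
      rw [← Finset.sum_sub_distrib]
      exact Finset.sum_congr rfl fun j _ => by ring
    have h3 : (e i : ℚ) * (∑ j, (gi j : ℚ) * (β j : ℚ) / (α j : ℚ))
        = ∑ j, (gi j : ℚ) * ((e i : ℚ) * (β j : ℚ) / (α j : ℚ)) := by
      rw [Finset.mul_sum]
      exact Finset.sum_congr rfl fun j _ => by ring
    rw [h1, hc₀, mul_add, h3, h2]
    ring
  -- all terms with j ≠ i vanish
  have hvanish : ∀ j : Fin m, j ≠ i →
      (gi j : ℚ) * (((e i : ℚ) * (β j : ℚ) / (α j : ℚ))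
        - ((⌈(e i : ℚ) * (β j : ℚ) / (α j : ℚ)⌉ : ℤ) : ℚ)) = 0 := by
    intro j hne
    obtain ⟨t, ht⟩ := hαdvd i j hne
    have hr : (e i : ℚ) * (β j : ℚ) / (α j : ℚ) = ((t * β j : ℕ) : ℚ) := by
      rw [ht]; push_cast; field_simp [hαQ j]
    rw [hr, Int.ceil_natCast]
    push_cast
    ring
  have hsingle : (degD (e i) : ℚ)
      = (gi i : ℚ) * (((e i : ℚ) * (β i : ℚ) / (α i : ℚ))
          - ((⌈(e i : ℚ) * (β i : ℚ) / (α i : ℚ)⌉ : ℤ) : ℚ))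
        + (e i : ℚ) * (∏ j, (a j : ℚ)) / (ℓ : ℚ) ^ 2 := by
    rw [hsum]
    congr 1
    exact Finset.sum_eq_single_of_mem i (Finset.mem_univ i)
      (fun j _ hj => hvanish j hj)
  have hprodcast : (∏ j, (a j : ℚ)) = ((∏ j, a j : ℕ) : ℚ) := by push_cast; rfl
  have hkeyQ : (α i : ℚ) * ((e i : ℚ) * (∏ j, (a j : ℚ))) = (gi i : ℚ) * (ℓ : ℚ) ^ 2 := by
    rw [hprodcast]
    exact_mod_cast congrArg (Nat.cast : ℕ → ℚ) hkeyN
  constructor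
  · -- case α i = 1
    intro h1
    have hβ0 : β i = 0 := by have := hβ i; omega
    have : (degD (e i) : ℚ) = ((gi i : ℤ) : ℚ) := by
      rw [hsingle, hβ0, h1]
      simp only [Nat.cast_zero, Nat.cast_one, mul_zero, zero_mul, zero_div, Int.ceil_zero]
      rw [h1] at hkeyQ
      push_cast at hkeyQ ⊢
      field_simp
      linarith [hkeyQ]
    exact_mod_cast this
  · -- case 2 ≤ α i
    intro h2
    obtain ⟨s, hs⟩ := hβ' i
    -- e i * β i + 1 = α i * s in ℕ, so r i = s - 1/α i
    have hsQ : (e i : ℚ) * (β i : ℚ) = (α i : ℚ) * (s : ℚ) - 1 := by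
      have : ((e i * β i + 1 : ℕ) : ℚ) = ((α i * s : ℕ) : ℚ) := by exact_mod_cast congrArg (fun n : ℕ => (n : ℚ)) hs
      push_cast at this
      linarith
    have hceil : ⌈(e i : ℚ) * (β i : ℚ) / (α i : ℚ)⌉ = (s : ℤ) := by
      rw [Int.ceil_eq_iff]
      have hα2 : (2 : ℚ) ≤ (α i : ℚ) := by exact_mod_cast h2
      have hαpos' : (0 : ℚ) < (α i : ℚ) := by linarith
      constructor
      · rw [hsQ]
        rw [lt_div_iff₀ hαpos']
        push_cast
        nlinarith
      · rw [hsQ]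
        rw [div_le_iff₀ hαpos']
        push_cast
        nlinarith
    have : (degD (e i) : ℚ) = 0 := by
      rw [hsingle, hceil, hsQ]
      have h4 : ((α i : ℚ) * (s : ℚ) - 1) / (α i : ℚ) - (((s : ℤ) : ℚ)) = -(1 / (α i : ℚ)) := by
        push_cast
        field_simp
        ring
      rw [h4]
      field_simp
      linear_combination hkeyQ
    exact_mod_cast this
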